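/- Suppose u: ℤ² → ℝ are discrete conformal factors of a locally univalent circle packing of the hexagonal lattice (i.e., the angle-sum equation Σ_{T ∋ v} θ_v^T(u) = 2π holds at every vertex, with radii e^{u}). Define edge weights η_{vw} = Σ_{T ∈ F_{v,w}} ∫₀¹ (∂θ_v/∂u_w)(f_T(t)) dt, where f_T(t) linearly interpolates between the conformal factors of T and of its horizontal translate R(T). Then D1u (the horizontal difference of u) is a discrete harmonic function on the hexagonal graph with weights η: for every vertex v, Σ_{w∼v} η_{vw}(D1u_w − D1u_v) = 0. -/

import Mathlib

open Real

/-- Inner angle at the vertex of radius `a` in the triangle with side lengths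
`a+b, a+c, b+c` formed by three mutually externally tangent circles. -/
noncomputable def ang (a b c : ℝ) : ℝ :=
  Real.arccos (((a + b) ^ 2 + (a + c) ^ 2 - (b + c) ^ 2) / (2 * (a + b) * (a + c)))

/-- The six neighbor displacements of the hexagonal lattice, in cyclic order. -/
def d : Fin 6 → ℤ × ℤ := ![(1, 0), (0, 1), (-1, 1), (-1, 0), (0, -1), (1, -1)]

/-- The horizontal translation unit. -/
def e1 : ℤ × ℤ := (1, 0)

/-- The angle-sum condition at vertex `v` for log-radii `u`: the six inner angles
at `v` in the six incident faces sum to `2π`. -/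
noncomputable def angleSum (u : ℤ × ℤ → ℝ) (v : ℤ × ℤ) : ℝ :=
  ∑ i : Fin 6,
    ang (Real.exp (u v)) (Real.exp (u (v + d i))) (Real.exp (u (v + d (i + 1))))

/-- `∂θ_v/∂u_w` of the inner angle at the vertex of log-radius `a` in the face whose
other log-radii are `b` (the differentiation variable) and `c`. -/
noncomputable def pd (a b c : ℝ) : ℝ :=
  deriv (fun s => ang (Real.exp a) (Real.exp s) (Real.exp c)) b

/-- Linear interpolation `f_T(t)` between the conformal factor at `v` and at its
horizontal translate `v + e1`. -/
noncomputable def P (u : ℤ × ℤ → ℝ) (v : ℤ × ℤ) (t : ℝ) : ℝ :=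
  (1 - t) * u v + t * u (v + e1)

/-- The weight `η_{vw}` of the edge `{v,w}`, where `z1, z2` are the third vertices of
the two faces containing the edge: the sum over these faces of
`∫₀¹ (∂θ_v/∂u_w)(f_T(t)) dt`. -/
noncomputable def eta (u : ℤ × ℤ → ℝ) (v w z1 z2 : ℤ × ℤ) : ℝ :=
  (∫ t in (0:ℝ)..1, pd (P u v t) (P u w t) (P u z1 t)) +
  (∫ t in (0:ℝ)..1, pd (P u v t) (P u w t) (P u z2 t))

/-- The horizontal difference operator `D1`. -/
noncomputable def D1 (u : ℤ × ℤ → ℝ) (v : ℤ × ℤ) : ℝ := u (v + e1) - u v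

noncomputable def G : ℝ × ℝ × ℝ → ℝ := fun p => ang (Real.exp p.1) (Real.exp p.2.1) (Real.exp p.2.2)

lemma ang_symm (a b c : ℝ) : ang a b c = ang a c b := by
  unfold ang; ring_nf

lemma ang_scale (k a b c : ℝ) (hk : 0 < k) (ha : 0 < a) (hb : 0 < b) (hc : 0 < c) :
    ang (k * a) (k * b) (k * c) = ang a b c := by
  unfold ang
  congr 1
  rw [div_eq_div_iff (by positivity) (by positivity)]
  ring

lemma contDiff_G : ContDiff ℝ 2 G := by
  rw [contDiff_iff_contDiffAt]
  intro p
  set a := Real.exp p.1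
  set b := Real.exp p.2.1
  set c := Real.exp p.2.2
  have ha : 0 < a := Real.exp_pos _
  have hb : 0 < b := Real.exp_pos _
  have hc : 0 < c := Real.exp_pos _
  have hden : 0 < 2 * (a + b) * (a + c) := by positivity
  set q : ℝ × ℝ × ℝ → ℝ := fun p =>
    ((Real.exp p.1 + Real.exp p.2.1) ^ 2 + (Real.exp p.1 + Real.exp p.2.2) ^ 2
      - (Real.exp p.2.1 + Real.exp p.2.2) ^ 2) /
      (2 * (Real.exp p.1 + Real.exp p.2.1) * (Real.exp p.1 + Real.exp p.2.2)) with hq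
  have hqp : q p = ((a + b) ^ 2 + (a + c) ^ 2 - (b + c) ^ 2) / (2 * (a + b) * (a + c)) := rfl
  have hlt : q p < 1 := by
    rw [hqp, div_lt_one hden]; nlinarith
  have hgt : (-1 : ℝ) < q p := by
    rw [hqp, lt_div_iff₀ hden]; nlinarith
  have he1 : ContDiff ℝ 2 (fun p : ℝ × ℝ × ℝ => Real.exp p.1) :=
    Real.contDiff_exp.comp contDiff_fst
  have he2 : ContDiff ℝ 2 (fun p : ℝ × ℝ × ℝ => Real.exp p.2.1) :=
    Real.contDiff_exp.comp (contDiff_fst.comp contDiff_snd)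
  have he3 : ContDiff ℝ 2 (fun p : ℝ × ℝ × ℝ => Real.exp p.2.2) :=
    Real.contDiff_exp.comp (contDiff_snd.comp contDiff_snd)
  have hqc : ContDiffAt ℝ 2 q p := by
    apply ContDiffAt.div
    · exact (((he1.add he2).pow 2).add ((he1.add he3).pow 2)).sub ((he2.add he3).pow 2)
        |>.contDiffAt
    · exact ((contDiff_const.mul (he1.add he2)).mul (he1.add he3)).contDiffAt
    · exact ne_of_gt hden
  exact (Real.contDiffAt_arccos (ne_of_gt hgt) (ne_of_lt hlt)).comp p hqc


lemma hasFDerivAt_G (p : ℝ × ℝ × ℝ) : HasFDerivAt G (fderiv ℝ G p) p :=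
  ((contDiff_G.differentiable (by norm_num)) p).hasFDerivAt

lemma continuous_fderiv_G : Continuous (fderiv ℝ G) :=
  contDiff_G.continuous_fderiv (by norm_num)

lemma pd_eq (a b c : ℝ) : pd a b c = fderiv ℝ G (a, b, c) (0, 1, 0) := by
  have h1 : HasDerivAt (fun s : ℝ => ((a, s, c) : ℝ × ℝ × ℝ)) (0, 1, 0) b :=
    (hasDerivAt_const b a).prodMk ((hasDerivAt_id b).prodMk (hasDerivAt_const b c))
  have h2 := (hasFDerivAt_G (a, b, c)).comp_hasDerivAt b h1
  exact h2.deriv ▸ rfl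

lemma pd3_eq (a b c : ℝ) : fderiv ℝ G (a, b, c) (0, 0, 1) = pd a c b := by
  have h1 : HasDerivAt (fun s : ℝ => ((a, b, s) : ℝ × ℝ × ℝ)) (0, 0, 1) c :=
    (hasDerivAt_const c a).prodMk ((hasDerivAt_const c b).prodMk (hasDerivAt_id c))
  have h2 := (hasFDerivAt_G (a, b, c)).comp_hasDerivAt c h1
  unfold pd
  rw [← h2.deriv]
  apply Filter.EventuallyEq.deriv_eq
  exact Filter.Eventually.of_forall fun s => ang_symm _ _ _

lemma fderiv_sum_zero (a b c : ℝ) : fderiv ℝ G (a, b, c) (1, 1, 1) = 0 := by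
  have h1 : HasDerivAt (fun s : ℝ => ((a + s, b + s, c + s) : ℝ × ℝ × ℝ)) (1, 1, 1) 0 := by
    simpa using ((hasDerivAt_const 0 a).add (hasDerivAt_id 0)).prodMk
      (((hasDerivAt_const 0 b).add (hasDerivAt_id 0)).prodMk
        ((hasDerivAt_const 0 c).add (hasDerivAt_id 0)))
  have h2 : HasFDerivAt G (fderiv ℝ G (a, b, c)) (a + 0, b + 0, c + 0) := by
    simpa using hasFDerivAt_G (a, b, c)
  have h3 := h2.comp_hasDerivAt 0 h1
  have h4 : (fun s : ℝ => G (a + s, b + s, c + s)) = fun _ => G (a, b, c) := by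
    funext s
    show ang (Real.exp (a + s)) (Real.exp (b + s)) (Real.exp (c + s)) = _
    rw [add_comm a s, add_comm b s, add_comm c s, Real.exp_add, Real.exp_add, Real.exp_add]
    exact ang_scale _ _ _ _ (Real.exp_pos _) (Real.exp_pos _) (Real.exp_pos _) (Real.exp_pos _)
  have h5 : HasDerivAt (fun _ : ℝ => G (a, b, c)) (fderiv ℝ G (a, b, c) (1, 1, 1)) 0 :=
    h3.congr_of_eventuallyEq (Filter.Eventually.of_forall fun s => (congrFun h4 s).symm)
  exact h5.unique (hasDerivAt_const 0 _)

lemma fderiv_decomp (a b c x y z : ℝ) :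
    fderiv ℝ G (a, b, c) (x, y, z) =
      (y - x) * pd a b c + (z - x) * pd a c b := by
  have hv : ((x, y, z) : ℝ × ℝ × ℝ)
      = x • ((1, 1, 1) : ℝ × ℝ × ℝ) + (y - x) • ((0, 1, 0) : ℝ × ℝ × ℝ)
        + (z - x) • ((0, 0, 1) : ℝ × ℝ × ℝ) := by
    simp only [Prod.smul_mk, Prod.mk_add_mk, smul_eq_mul, Prod.mk.injEq]
    refine ⟨by ring, by ring, by ring⟩
  rw [hv, map_add, map_add, map_smul, map_smul, map_smul, fderiv_sum_zero, ← pd_eq, pd3_eq]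
  simp [smul_eq_mul]


lemma hasDerivAt_P (u : ℤ × ℤ → ℝ) (w : ℤ × ℤ) (t : ℝ) :
    HasDerivAt (P u w) (D1 u w) t := by
  have h : HasDerivAt (fun t : ℝ => (1 - t) * u w + t * u (w + e1))
      ((0 - 1) * u w + 1 * u (w + e1)) t :=
    (((hasDerivAt_const t (1 : ℝ)).sub (hasDerivAt_id t)).mul_const (u w)).add
      ((hasDerivAt_id t).mul_const (u (w + e1)))
  have : (0 - 1) * u w + 1 * u (w + e1) = D1 u w := by unfold D1; ring
  rw [this] at h
  exact h

lemma continuous_P (u : ℤ × ℤ → ℝ) (w : ℤ × ℤ) : Continuous (P u w) := by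
  unfold P; fun_prop

lemma continuous_pdP (u : ℤ × ℤ → ℝ) (a b c : ℤ × ℤ) :
    Continuous fun t => pd (P u a t) (P u b t) (P u c t) := by
  have h : (fun t => pd (P u a t) (P u b t) (P u c t)) =
      fun t => (fderiv ℝ G (P u a t, P u b t, P u c t)) (0, 1, 0) :=
    funext fun t => pd_eq _ _ _
  rw [h]
  exact (continuous_fderiv_G.comp
    ((continuous_P u a).prodMk ((continuous_P u b).prodMk (continuous_P u c)))).clm_apply
    continuous_const


/-- `D1 u` is discrete harmonic for the weights `η`: at each vertex `v`, the weighted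
sum of differences of `D1 u` over the six neighbors vanishes. -/
theorem stmt_16 (u : ℤ × ℤ → ℝ)
    (hpack : ∀ v : ℤ × ℤ, angleSum u v = 2 * Real.pi) :
    ∀ v : ℤ × ℤ,
      ∑ i : Fin 6,
        eta u v (v + d i) (v + d (i - 1)) (v + d (i + 1)) *
          (D1 u (v + d i) - D1 u v) = 0 := by
  intro v
  set c : Fin 6 → ℝ := fun i => D1 u (v + d i) - D1 u v with hc
  set F : Fin 6 → ℝ → ℝ := fun i t =>
    c i * pd (P u v t) (P u (v + d i) t) (P u (v + d (i + 1)) t) +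
    c (i + 1) * pd (P u v t) (P u (v + d (i + 1)) t) (P u (v + d i) t) with hF
  set g : ℝ → ℝ := fun t =>
    ∑ i : Fin 6, G (P u v t, P u (v + d i) t, P u (v + d (i + 1)) t) with hg
  have hint : ∀ a b c' : ℤ × ℤ,
      IntervalIntegrable (fun t => pd (P u a t) (P u b t) (P u c' t))
        MeasureTheory.volume 0 1 :=
    fun a b c' => (continuous_pdP u a b c').intervalIntegrable 0 1
  have hFi : ∀ i : Fin 6, IntervalIntegrable (F i) MeasureTheory.volume 0 1 := fun i =>
    ((hint _ _ _).const_mul _).add ((hint _ _ _).const_mul _)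
  have hderiv : ∀ t : ℝ, HasDerivAt g (∑ i : Fin 6, F i t) t := by
    intro t
    apply HasDerivAt.fun_sum
    intro i _
    have h1 : HasDerivAt
        (fun t : ℝ => ((P u v t, P u (v + d i) t, P u (v + d (i + 1)) t) : ℝ × ℝ × ℝ))
        (D1 u v, D1 u (v + d i), D1 u (v + d (i + 1))) t :=
      (hasDerivAt_P u v t).prodMk ((hasDerivAt_P u _ t).prodMk (hasDerivAt_P u _ t))
    have h2 := (hasFDerivAt_G _).comp_hasDerivAt t h1
    rw [fderiv_decomp] at h2
    exact h2
  have hg0 : g 0 = angleSum u v := by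
    unfold angleSum
    apply Finset.sum_congr rfl
    intro i _
    simp [G, P]
  have hg1 : g 1 = angleSum u (v + e1) := by
    unfold angleSum
    apply Finset.sum_congr rfl
    intro i _
    simp [G, P, add_right_comm]
  have key : (∫ t in (0:ℝ)..1, ∑ i : Fin 6, F i t) = g 1 - g 0 :=
    intervalIntegral.integral_eq_sub_of_hasDerivAt (fun t _ => hderiv t)
      ((continuous_finset_sum _ fun i _ =>
        ((continuous_const.mul (continuous_pdP u _ _ _)).add
          (continuous_const.mul (continuous_pdP u _ _ _)))).intervalIntegrable 0 1)
  rw [intervalIntegral.integral_finset_sum (fun i _ => hFi i), hg0, hg1, hpack, hpack,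
    sub_self] at key
  -- key : ∑ i, ∫ F i = 0
  have hsplit : ∀ i : Fin 6, (∫ t in (0:ℝ)..1, F i t) =
      c i * (∫ t in (0:ℝ)..1, pd (P u v t) (P u (v + d i) t) (P u (v + d (i + 1)) t)) +
      c (i + 1) * (∫ t in (0:ℝ)..1, pd (P u v t) (P u (v + d (i + 1)) t) (P u (v + d i) t)) := by
    intro i
    rw [hF]
    rw [intervalIntegral.integral_add ((hint _ _ _).const_mul _) ((hint _ _ _).const_mul _),
      intervalIntegral.integral_const_mul, intervalIntegral.integral_const_mul]
  rw [Finset.sum_congr rfl (fun i _ => hsplit i), Finset.sum_add_distrib] at key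
  -- reindex the second sum
  have hre : (∑ i : Fin 6,
      c (i + 1) * ∫ t in (0:ℝ)..1, pd (P u v t) (P u (v + d (i + 1)) t) (P u (v + d i) t)) =
      ∑ j : Fin 6,
      c j * ∫ t in (0:ℝ)..1, pd (P u v t) (P u (v + d j) t) (P u (v + d (j - 1)) t) := by
    apply Fintype.sum_equiv (Equiv.addRight (1 : Fin 6))
    intro i
    simp only [Equiv.coe_addRight]
    have h6 : (i + 1 : Fin 6) - 1 = i := by simp
    rw [h6]
  rw [hre] at key
  -- now expand eta in the goal
  have hgoal : ∀ i : Fin 6,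
      eta u v (v + d i) (v + d (i - 1)) (v + d (i + 1)) * (D1 u (v + d i) - D1 u v) =
      c i * (∫ t in (0:ℝ)..1, pd (P u v t) (P u (v + d i) t) (P u (v + d (i - 1)) t)) +
      c i * (∫ t in (0:ℝ)..1, pd (P u v t) (P u (v + d i) t) (P u (v + d (i + 1)) t)) := by
    intro i
    rw [eta, hc]
    ring
  rw [Finset.sum_congr rfl (fun i _ => hgoal i), Finset.sum_add_distrib]
  linarith [key]
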